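/- Let n be odd and let G = K₂ ∨ M_{n−2} be the graph obtained from K₂ + M_{n−3} by adding one new vertex u adjacent to one endpoint of each of two distinct matching edges. Then G is planar, has n vertices and ⌊5n/2⌋ − 4 edges, and contains no vertex-disjoint union of C₃ and Θ₄. -/

import Mathlib

/-- Θ₄ : K₄ minus the edge 1-3. -/
def theta4 : SimpleGraph (Fin 4) :=
  (SimpleGraph.completeGraph (Fin 4)).deleteEdges {s(1, 3)}

/-- C₃ ∪̇ Θ₄ : the vertex-disjoint union of a triangle and Θ₄. -/
def c3Theta4 : SimpleGraph (Fin 3 ⊕ Fin 4) :=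
  SimpleGraph.fromRel (fun x y =>
    match x, y with
    | Sum.inl a, Sum.inl b => a ≠ b
    | Sum.inr a, Sum.inr b => theta4.Adj a b
    | _, _ => False)

/-- `G` contains `H` as a subgraph. -/
def Contains {V W : Type} (G : SimpleGraph V) (H : SimpleGraph W) : Prop :=
  ∃ φ : H →g G, Function.Injective φ

/-- Minor relation (branch decompositions). -/
def HasMinor {V W : Type} (G : SimpleGraph V) (H : SimpleGraph W) : Prop :=
  ∃ f : W → Set V,
    (∀ w, (f w).Nonempty) ∧
    (∀ w, (G.induce (f w)).Connected) ∧
    (Pairwise fun a b => Disjoint (f a) (f b)) ∧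
    ∀ a b, H.Adj a b → ∃ x ∈ f a, ∃ y ∈ f b, G.Adj x y

/-- Planarity via Wagner's characterization. -/
def IsPlanar {V : Type} (G : SimpleGraph V) : Prop :=
  ¬ HasMinor G (SimpleGraph.completeGraph (Fin 5)) ∧
  ¬ HasMinor G (completeBipartiteGraph (Fin 3) (Fin 3))

/-- K₂ ∨ M_{n−2}: the join of an edge (the two vertices `inl (inl _)`) with the
matching M_{n−3} (vertices `inl (inr _)`, matched in pairs {2k, 2k+1}), together
with one extra vertex u (= `inr ()`) joined to the vertices 0 and 2, which are
endpoints of two distinct matching edges. -/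
def k2veeM (n : ℕ) : SimpleGraph ((Fin 2 ⊕ Fin (n - 3)) ⊕ Unit) :=
  SimpleGraph.fromRel (fun x y =>
    match x, y with
    | Sum.inl (Sum.inl _), Sum.inl _ => True
    | Sum.inl (Sum.inr a), Sum.inl (Sum.inr b) => (a : ℕ) / 2 = (b : ℕ) / 2
    | Sum.inr _, Sum.inl (Sum.inr v) => (v : ℕ) = 0 ∨ (v : ℕ) = 2
    | _, _ => False)



namespace Stmt15
variable {n : ℕ}

def OC (S : Set ℕ) : Prop := ∀ ⦃x⦄, x ∈ S → ∀ ⦃y⦄, y ∈ S → ∀ ⦃k⦄, x ≤ k → k ≤ y → k ∈ S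
def Touch (I J : Set ℕ) : Prop := ∃ x ∈ I, ∃ y ∈ J, y = x + 1 ∨ x = y + 1
def SLt (I J : Set ℕ) : Prop := ∀ ⦃x⦄, x ∈ I → ∀ ⦃y⦄, y ∈ J → x < y

lemma touch_symm {I J} (h : Touch I J) : Touch J I := by
  obtain ⟨x, hx, y, hy, h⟩ := h; exact ⟨y, hy, x, hx, h.symm⟩

lemma comparable {I J : Set ℕ} (hI : OC I) (hJ : OC J) (hd : Disjoint I J)
    (hIn : I.Nonempty) (hJn : J.Nonempty) : SLt I J ∨ SLt J I := by
  obtain ⟨i0, hi0⟩ := hIn; obtain ⟨j0, hj0⟩ := hJn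
  have hne : i0 ≠ j0 := fun h => Set.disjoint_left.mp hd hi0 (h ▸ hj0)
  rcases lt_or_gt_of_ne hne with h | h
  · left; intro i hi j hj
    by_contra hc; push_neg at hc
    rcases le_or_gt i0 j with h1 | h1
    · exact Set.disjoint_left.mp hd (hI hi0 hi h1 hc) hj
    · exact Set.disjoint_left.mp hd hi0 (hJ hj hj0 h1.le h.le)
  · right; intro j hj i hi
    by_contra hc; push_neg at hc
    rcases le_or_gt j0 i with h1 | h1
    · exact Set.disjoint_left.mp hd hi (hJ hj0 hj h1 hc)
    · exact Set.disjoint_left.mp hd (hI hi hi0 h1.le h.le) hj0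

lemma same_side_gt {I J K : Set ℕ} (hd : Disjoint J K) (hIJ : SLt I J) (hIK : SLt I K)
    (tJ : Touch I J) (tK : Touch I K) : False := by
  obtain ⟨x1, hx1, j, hj, hj'⟩ := tJ
  obtain ⟨x2, hx2, k, hk, hk'⟩ := tK
  have h1 := hIJ hx1 hj
  have h2 := hIK hx2 hk
  have h3 := hIJ hx2 hj
  have h4 := hIK hx1 hk
  have : j = k := by omega
  exact Set.disjoint_left.mp hd hj (this ▸ hk)

lemma same_side_lt {I J K : Set ℕ} (hd : Disjoint J K) (hIJ : SLt J I) (hIK : SLt K I)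
    (tJ : Touch I J) (tK : Touch I K) : False := by
  obtain ⟨x1, hx1, j, hj, hj'⟩ := tJ
  obtain ⟨x2, hx2, k, hk, hk'⟩ := tK
  have h1 := hIJ hj hx1
  have h2 := hIK hk hx2
  have h3 := hIJ hj hx2
  have h4 := hIK hk hx1
  have : j = k := by omega
  exact Set.disjoint_left.mp hd hj (this ▸ hk)

lemma between {I J K : Set ℕ} (hJn : J.Nonempty) (hIJ : SLt I J) (hJK : SLt J K)
    (t : Touch I K) : False := by
  obtain ⟨x, hx, z, hz, h⟩ := t
  obtain ⟨j, hj⟩ := hJn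
  have := hIJ hx hj; have := hJK hj hz; omega

lemma no_k3 {A B C : Set ℕ} (hA : OC A) (hB : OC B) (hC : OC C)
    (hAn : A.Nonempty) (hBn : B.Nonempty) (hCn : C.Nonempty)
    (dAB : Disjoint A B) (dAC : Disjoint A C) (dBC : Disjoint B C)
    (tAB : Touch A B) (tAC : Touch A C) (tBC : Touch B C) : False := by
  rcases comparable hA hB dAB hAn hBn with h1 | h1 <;>
    rcases comparable hA hC dAC hAn hCn with h2 | h2
  · exact same_side_gt dBC h1 h2 tAB tAC
  · exact between hAn h2 h1 (touch_symm tBC)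
  · exact between hAn h1 h2 tBC
  · exact same_side_lt dBC h1 h2 tAB tAC

lemma no_k13 {I A B C : Set ℕ} (hI : OC I) (hA : OC A) (hB : OC B) (hC : OC C)
    (hIn : I.Nonempty) (hAn : A.Nonempty) (hBn : B.Nonempty) (hCn : C.Nonempty)
    (dAB : Disjoint A B) (dAC : Disjoint A C) (dBC : Disjoint B C)
    (dIA : Disjoint I A) (dIB : Disjoint I B) (dIC : Disjoint I C)
    (tA : Touch I A) (tB : Touch I B) (tC : Touch I C) : False := by
  rcases comparable hI hA dIA hIn hAn with h1 | h1 <;>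
    rcases comparable hI hB dIB hIn hBn with h2 | h2 <;>
      rcases comparable hI hC dIC hIn hCn with h3 | h3
  · exact same_side_gt dAB h1 h2 tA tB
  · exact same_side_gt dAB h1 h2 tA tB
  · exact same_side_gt dAC h1 h3 tA tC
  · exact same_side_lt dBC h2 h3 tB tC
  · exact same_side_gt dBC h2 h3 tB tC
  · exact same_side_lt dAC h1 h3 tA tC
  · exact same_side_lt dAB h1 h2 tA tB
  · exact same_side_lt dAB h1 h2 tA tB

lemma no_c4 {A1 A2 B1 B2 : Set ℕ} (hA1 : OC A1) (hA2 : OC A2) (hB1 : OC B1) (hB2 : OC B2)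
    (hA1n : A1.Nonempty) (hA2n : A2.Nonempty) (hB1n : B1.Nonempty) (hB2n : B2.Nonempty)
    (dA : Disjoint A1 A2) (dB : Disjoint B1 B2)
    (d11 : Disjoint A1 B1) (d12 : Disjoint A1 B2) (d21 : Disjoint A2 B1) (d22 : Disjoint A2 B2)
    (t11 : Touch A1 B1) (t12 : Touch A1 B2) (t21 : Touch A2 B1) (t22 : Touch A2 B2) : False := by
  obtain ⟨a1, ha1⟩ := hA1n; obtain ⟨a2, ha2⟩ := hA2n
  obtain ⟨b1, hb1⟩ := hB1n; obtain ⟨b2, hb2⟩ := hB2n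
  rcases comparable hA1 hB1 d11 ⟨a1, ha1⟩ ⟨b1, hb1⟩ with h1 | h1 <;>
    rcases comparable hA1 hB2 d12 ⟨a1, ha1⟩ ⟨b2, hb2⟩ with h2 | h2 <;>
      rcases comparable hA2 hB1 d21 ⟨a2, ha2⟩ ⟨b1, hb1⟩ with h3 | h3 <;>
        rcases comparable hA2 hB2 d22 ⟨a2, ha2⟩ ⟨b2, hb2⟩ with h4 | h4
  · exact same_side_gt dB h1 h2 t11 t12
  · exact same_side_gt dB h1 h2 t11 t12
  · exact same_side_gt dB h1 h2 t11 t12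
  · exact same_side_gt dB h1 h2 t11 t12
  · exact same_side_gt dB h3 h4 t21 t22
  · exact same_side_gt dA h2 h4 (touch_symm t12) (touch_symm t22)
  · have e1 := h1 ha1 hb1; have e2 := h3 hb1 ha2; have e3 := h4 ha2 hb2
    have e4 := h2 hb2 ha1; omega
  · exact same_side_lt dB h3 h4 t21 t22
  · exact same_side_gt dB h3 h4 t21 t22
  · have e1 := h2 ha1 hb2; have e2 := h4 hb2 ha2; have e3 := h3 ha2 hb1
    have e4 := h1 hb1 ha1; omega
  · exact same_side_gt dA h1 h3 (touch_symm t11) (touch_symm t21)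
  · exact same_side_lt dB h3 h4 t21 t22
  · exact same_side_lt dB h1 h2 t11 t12
  · exact same_side_lt dB h1 h2 t11 t12
  · exact same_side_lt dB h1 h2 t11 t12
  · exact same_side_lt dB h1 h2 t11 t12


abbrev VV (n : ℕ) := (Fin 2 ⊕ Fin (n - 3)) ⊕ Unit

def Good (v : VV n) : Prop := v ≠ Sum.inl (Sum.inl 0) ∧ v ≠ Sum.inl (Sum.inl 1)

def idx : VV n → ℕ
  | .inl (.inl _) => 0
  | .inl (.inr a) =>
      if (a : ℕ) = 0 then 1 else if (a : ℕ) = 1 then 0 else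
      if (a : ℕ) = 2 then 3 else if (a : ℕ) = 3 then 4 else (a : ℕ) + 2
  | .inr _ => 2

lemma good_cases {v : VV n} (h : Good v) :
    (∃ a : Fin (n-3), v = Sum.inl (Sum.inr a)) ∨ v = Sum.inr () := by
  obtain ⟨h1, h2⟩ := h
  rcases v with (i | a) | ⟨⟩
  · exfalso; fin_cases i <;> simp_all
  · exact Or.inl ⟨a, rfl⟩
  · exact Or.inr rfl

lemma idx_inj {a b : VV n} (ha : Good a) (hb : Good b) (h : idx a = idx b) : a = b := by
  rcases good_cases ha with ⟨x, rfl⟩ | rfl <;> rcases good_cases hb with ⟨y, rfl⟩ | rfl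
  · simp only [idx] at h
    have : (x : ℕ) = (y : ℕ) := by split_ifs at h <;> omega
    exact congrArg _ (congrArg _ (Fin.ext this))
  · simp only [idx] at h; exfalso; split_ifs at h <;> omega
  · simp only [idx] at h; exfalso; split_ifs at h <;> omega
  · rfl

lemma adj_idx {a b : VV n} (ha : Good a) (hb : Good b) (h : (k2veeM n).Adj a b) :
    idx b = idx a + 1 ∨ idx a = idx b + 1 := by
  rcases good_cases ha with ⟨x, rfl⟩ | rfl <;> rcases good_cases hb with ⟨y, rfl⟩ | rfl
  · rw [k2veeM, SimpleGraph.fromRel_adj] at h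
    simp only [ne_eq, Sum.inl.injEq, Sum.inr.injEq] at h
    obtain ⟨hne, h⟩ := h
    have hxy : (x : ℕ) ≠ (y : ℕ) := fun e => hne (Fin.ext e)
    have hdiv : (x : ℕ) / 2 = (y : ℕ) / 2 := by tauto
    simp only [idx]; split_ifs <;> omega
  · rw [k2veeM, SimpleGraph.fromRel_adj] at h
    simp only at h
    obtain ⟨-, h⟩ := h
    have : (x : ℕ) = 0 ∨ (x : ℕ) = 2 := by tauto
    simp only [idx]; split_ifs <;> omega
  · rw [k2veeM, SimpleGraph.fromRel_adj] at h
    simp only at h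
    obtain ⟨-, h⟩ := h
    have : (y : ℕ) = 0 ∨ (y : ℕ) = 2 := by tauto
    simp only [idx]; split_ifs <;> omega
  · exact absurd h (SimpleGraph.irrefl _)

lemma walk_interval {A : Set (VV n)} (hA : ∀ v ∈ A, Good v) :
    ∀ {x y : A} (_ : ((k2veeM n).induce A).Walk x y) (k : ℕ),
      (idx x.1 ≤ k ∧ k ≤ idx y.1) ∨ (idx y.1 ≤ k ∧ k ≤ idx x.1) →
      ∃ c ∈ A, idx c = k := by
  intro x y w
  induction w with
  | @nil p => intro k h1; exact ⟨p.1, p.2, by omega⟩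
  | @cons u v z hadj w ih =>
      intro k h1
      rcases eq_or_ne k (idx u.1) with rfl | hk
      · exact ⟨u.1, u.2, rfl⟩
      · have hadj' : (k2veeM n).Adj u.1 v.1 := hadj
        have h2 := adj_idx (hA _ u.2) (hA _ v.2) hadj'
        exact ih k (by omega)


lemma oc_image {A : Set (VV n)} (hA : ∀ v ∈ A, Good v)
    (hc : ((k2veeM n).induce A).Connected) : OC (idx '' A) := by
  rintro _ ⟨a, ha, rfl⟩ _ ⟨b, hb, rfl⟩ k h1 h2
  obtain ⟨w⟩ := hc.preconnected ⟨a, ha⟩ ⟨b, hb⟩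
  obtain ⟨c, hc', hc''⟩ := walk_interval hA w k (Or.inl ⟨h1, h2⟩)
  exact ⟨c, hc', hc''⟩



lemma cardVV (hn : 7 ≤ n) : Fintype.card (VV n) = n := by
  simp [Fintype.card_sum]; omega

noncomputable instance : DecidableRel (k2veeM n).Adj := fun _ _ => Classical.dec _

lemma adjX_iff (i : Fin 2) (w : VV n) :
    (k2veeM n).Adj (Sum.inl (Sum.inl i)) w ↔ w ≠ Sum.inl (Sum.inl i) ∧ w ≠ Sum.inr () := by
  rw [k2veeM, SimpleGraph.fromRel_adj]
  rcases w with (j | a) | ⟨⟩ <;> simp [eq_comm]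

lemma adjU_iff (w : VV n) :
    (k2veeM n).Adj (Sum.inr ()) w ↔
      ∃ a : Fin (n-3), w = Sum.inl (Sum.inr a) ∧ ((a : ℕ) = 0 ∨ (a : ℕ) = 2) := by
  rw [k2veeM, SimpleGraph.fromRel_adj]
  rcases w with (j | a) | ⟨⟩ <;> simp

lemma degX (hn : 7 ≤ n) (i : Fin 2) : (k2veeM n).degree (Sum.inl (Sum.inl i)) = n - 2 := by
  have h : (k2veeM n).neighborFinset (Sum.inl (Sum.inl i)) =
      Finset.univ \ {Sum.inl (Sum.inl i), Sum.inr ()} := by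
    ext w
    simp [SimpleGraph.mem_neighborFinset, adjX_iff, not_or]
  rw [← SimpleGraph.card_neighborFinset_eq_degree, h, Finset.card_sdiff_of_subset (by simp)]
  rw [Finset.card_univ, cardVV hn]
  simp

lemma degU (hn : 7 ≤ n) : (k2veeM n).degree (Sum.inr ()) = 2 := by
  have h0 : (0 : ℕ) < n - 3 := by omega
  have h2 : (2 : ℕ) < n - 3 := by omega
  have h : (k2veeM n).neighborFinset (Sum.inr ()) =
      {Sum.inl (Sum.inr ⟨0, h0⟩), Sum.inl (Sum.inr ⟨2, h2⟩)} := by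
    ext w
    simp only [SimpleGraph.mem_neighborFinset, adjU_iff, Finset.mem_insert,
      Finset.mem_singleton]
    constructor
    · rintro ⟨a, rfl, h | h⟩
      · exact Or.inl (by congr 2; exact Fin.ext h)
      · exact Or.inr (by congr 2; exact Fin.ext h)
    · rintro (rfl | rfl)
      · exact ⟨_, rfl, Or.inl rfl⟩
      · exact ⟨_, rfl, Or.inr rfl⟩
  rw [← SimpleGraph.card_neighborFinset_eq_degree, h]
  rw [Finset.card_insert_of_notMem (by simp [Fin.ext_iff]), Finset.card_singleton]

def pa (hm : (n - 3) % 2 = 0) (a : Fin (n-3)) : Fin (n-3) :=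
  ⟨if (a : ℕ) % 2 = 0 then (a : ℕ) + 1 else (a : ℕ) - 1, by
    have := a.isLt; split <;> omega⟩

lemma pa_val (hm : (n - 3) % 2 = 0) (a : Fin (n-3)) :
    (pa hm a : ℕ) = if (a : ℕ) % 2 = 0 then (a : ℕ) + 1 else (a : ℕ) - 1 := rfl

lemma adjM_iff (hm : (n - 3) % 2 = 0) (a : Fin (n-3)) (w : VV n) :
    (k2veeM n).Adj (Sum.inl (Sum.inr a)) w ↔
      (w = Sum.inl (Sum.inl 0) ∨ w = Sum.inl (Sum.inl 1) ∨ w = Sum.inl (Sum.inr (pa hm a)) ∨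
        (((a : ℕ) = 0 ∨ (a : ℕ) = 2) ∧ w = Sum.inr ())) := by
  have ha := a.isLt
  have hp := pa_val hm a
  rw [k2veeM, SimpleGraph.fromRel_adj]
  rcases w with (j | b) | ⟨⟩
  · constructor
    · intro _
      fin_cases j
      · exact Or.inl rfl
      · exact Or.inr (Or.inl rfl)
    · intro _
      exact ⟨by simp, Or.inr trivial⟩
  · have hb := b.isLt
    constructor
    · rintro ⟨hne, h⟩
      have h' : (a : ℕ) / 2 = (b : ℕ) / 2 := by
        rcases h with h | h
        · exact h
        · exact h.symm
      have hne' : (a : ℕ) ≠ (b : ℕ) := fun e => hne (by exact congrArg _ (congrArg _ (Fin.ext e)))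
      refine Or.inr (Or.inr (Or.inl ?_))
      have : (b : ℕ) = (pa hm a : ℕ) := by rw [hp]; split <;> omega
      exact congrArg _ (congrArg _ (Fin.ext this))
    · rintro (h | h | h | ⟨-, h⟩)
      · exact absurd h (by simp)
      · exact absurd h (by simp)
      · have hb' : b = pa hm a := by injection h with h'; injection h' with h''
        subst hb'
        have h1 : (a : ℕ) ≠ ((pa hm a) : ℕ) := by rw [hp]; split <;> omega
        refine ⟨fun e => h1 (by injection e with e'; injection e' with e''; exact congrArg _ e''), ?_⟩
        left
        show (a : ℕ) / 2 = ((pa hm a) : ℕ) / 2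
        rw [hp]; split <;> omega
      · exact absurd h (by simp)
  · constructor
    · rintro ⟨-, h | h⟩
      · exact absurd h (by simp [k2veeM])
      · exact Or.inr (Or.inr (Or.inr ⟨h, rfl⟩))
    · rintro (h | h | h | ⟨h02, -⟩)
      · exact absurd h (by simp)
      · exact absurd h (by simp)
      · exact absurd h (by simp)
      · exact ⟨by simp, Or.inr h02⟩

lemma degM (hn : 7 ≤ n) (hm : (n - 3) % 2 = 0) (a : Fin (n-3)) :
    (k2veeM n).degree (Sum.inl (Sum.inr a)) =
      if (a : ℕ) = 0 ∨ (a : ℕ) = 2 then 4 else 3 := by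
  by_cases h02 : (a : ℕ) = 0 ∨ (a : ℕ) = 2
  · have h : (k2veeM n).neighborFinset (Sum.inl (Sum.inr a)) =
        {Sum.inl (Sum.inl 0), Sum.inl (Sum.inl 1), Sum.inl (Sum.inr (pa hm a)), Sum.inr ()} := by
      ext w
      simp only [SimpleGraph.mem_neighborFinset, adjM_iff hm, Finset.mem_insert,
        Finset.mem_singleton, h02, true_and]
    rw [← SimpleGraph.card_neighborFinset_eq_degree, h, if_pos h02]
    rw [Finset.card_insert_of_notMem (by simp [Fin.ext_iff]),
      Finset.card_insert_of_notMem (by simp [Fin.ext_iff]),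
      Finset.card_pair (by simp)]
  · have h : (k2veeM n).neighborFinset (Sum.inl (Sum.inr a)) =
        {Sum.inl (Sum.inl 0), Sum.inl (Sum.inl 1), Sum.inl (Sum.inr (pa hm a))} := by
      ext w
      simp only [SimpleGraph.mem_neighborFinset, adjM_iff hm, Finset.mem_insert,
        Finset.mem_singleton, h02, false_and, or_false]
    rw [← SimpleGraph.card_neighborFinset_eq_degree, h, if_neg h02]
    rw [Finset.card_insert_of_notMem (by simp [Fin.ext_iff]),
      Finset.card_pair (by simp [Fin.ext_iff])]

lemma sum_deg (hn : 7 ≤ n) (hm : (n - 3) % 2 = 0) :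
    ∑ v : VV n, (k2veeM n).degree v = 5 * n - 9 := by
  rw [Fintype.sum_sum_type, Fintype.sum_sum_type]
  have e1 : ∑ i : Fin 2, (k2veeM n).degree (Sum.inl (Sum.inl i)) = 2 * (n - 2) := by
    simp [degX hn]; try ring
  have e3 : ∑ u : Unit, (k2veeM n).degree (Sum.inr u) = 2 := by
    simp [degU hn]
  have e2 : ∑ a : Fin (n-3), (k2veeM n).degree (Sum.inl (Sum.inr a)) = 3 * (n - 3) + 2 := by
    have hc : ∀ a : Fin (n-3), (k2veeM n).degree (Sum.inl (Sum.inr a)) =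
        3 + (if (a : ℕ) = 0 ∨ (a : ℕ) = 2 then 1 else 0) := by
      intro a; rw [degM hn hm]; split <;> rfl
    rw [Finset.sum_congr rfl (fun a _ => hc a), Finset.sum_add_distrib]
    have h0 : (0 : ℕ) < n - 3 := by omega
    have h2 : (2 : ℕ) < n - 3 := by omega
    have hfe : (Finset.univ.filter (fun a : Fin (n-3) => (a : ℕ) = 0 ∨ (a : ℕ) = 2)) =
        {⟨0, h0⟩, ⟨2, h2⟩} := by
      ext a
      simp only [Finset.mem_filter, Finset.mem_univ, true_and, Finset.mem_insert,
        Finset.mem_singleton, Fin.ext_iff]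
    have hfilter : ∑ a : Fin (n-3), (if (a : ℕ) = 0 ∨ (a : ℕ) = 2 then (1:ℕ) else 0) = 2 := by
      have : ∑ a : Fin (n-3), (if (a : ℕ) = 0 ∨ (a : ℕ) = 2 then (1:ℕ) else 0) =
          (Finset.univ.filter (fun a : Fin (n-3) => (a : ℕ) = 0 ∨ (a : ℕ) = 2)).card := by
        simp [Finset.sum_boole]
      rw [this, hfe, Finset.card_pair (by simp [Fin.ext_iff])]
    have hsum1 : ∑ _a : Fin (n-3), (3:ℕ) = 3 * (n-3) := by
      simp [Finset.sum_const, mul_comm]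
    omega
  rw [e1, e2, e3]; omega



lemma bad_cover {W : Type} [Nonempty W] (f : W → Set (VV n))
    (hdisj : Pairwise fun a b => Disjoint (f a) (f b)) :
    ∃ i0 i1 : W, ∀ i, ¬ (∀ v ∈ f i, Good v) → i = i0 ∨ i = i1 := by
  have key : ∀ (z : VV n) (i j : W), z ∈ f i → z ∈ f j → i = j := by
    intro z i j hi hj
    by_contra h
    exact Set.disjoint_left.mp (hdisj h) hi hj
  by_cases hx : ∃ i, Sum.inl (Sum.inl 0) ∈ f i <;>
    by_cases hy : ∃ i, Sum.inl (Sum.inl 1) ∈ f i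
  · refine ⟨hx.choose, hy.choose, fun i hi => ?_⟩
    simp only [not_forall] at hi
    obtain ⟨v, hv, hvg⟩ := hi
    simp only [Good, not_and, not_not, ne_eq, not_forall] at hvg
    rcases Classical.em (v = Sum.inl (Sum.inl 0)) with rfl | hv0
    · exact Or.inl (key _ _ _ hv hx.choose_spec)
    · exact Or.inr (key _ _ _ (by rwa [hvg hv0] at hv) hy.choose_spec)
  · refine ⟨hx.choose, hx.choose, fun i hi => ?_⟩
    simp only [not_forall] at hi
    obtain ⟨v, hv, hvg⟩ := hi
    simp only [Good, not_and, not_not, ne_eq, not_forall] at hvg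
    rcases Classical.em (v = Sum.inl (Sum.inl 0)) with rfl | hv0
    · exact Or.inl (key _ _ _ hv hx.choose_spec)
    · exact absurd ⟨i, by rwa [hvg hv0] at hv⟩ hy
  · refine ⟨hy.choose, hy.choose, fun i hi => ?_⟩
    simp only [not_forall] at hi
    obtain ⟨v, hv, hvg⟩ := hi
    simp only [Good, not_and, not_not, ne_eq, not_forall] at hvg
    rcases Classical.em (v = Sum.inl (Sum.inl 0)) with rfl | hv0
    · exact absurd ⟨i, hv⟩ hx
    · exact Or.inl (key _ _ _ (by rwa [hvg hv0] at hv) hy.choose_spec)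
  · refine ⟨Classical.arbitrary W, Classical.arbitrary W, fun i hi => ?_⟩
    simp only [not_forall] at hi
    obtain ⟨v, hv, hvg⟩ := hi
    simp only [Good, not_and, not_not, ne_eq, not_forall] at hvg
    rcases Classical.em (v = Sum.inl (Sum.inl 0)) with rfl | hv0
    · exact absurd ⟨i, hv⟩ hx
    · exact absurd ⟨i, by rwa [hvg hv0] at hv⟩ hy

section minors
variable {W : Type} {f : W → Set (VV n)}

lemma img_disjoint (hdisj : Pairwise fun a b => Disjoint (f a) (f b))
    {i j : W} (hgi : ∀ v ∈ f i, Good v) (hgj : ∀ v ∈ f j, Good v) (hij : i ≠ j) :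
    Disjoint (idx '' f i) (idx '' f j) := by
  rw [Set.disjoint_left]
  rintro _ ⟨u, hu, rfl⟩ ⟨v, hv, hvu⟩
  have : v = u := idx_inj (hgj _ hv) (hgi _ hu) hvu
  exact Set.disjoint_left.mp (hdisj hij) hu (this ▸ hv)

lemma img_touch {i j : W} (hgi : ∀ v ∈ f i, Good v) (hgj : ∀ v ∈ f j, Good v)
    (h : ∃ x ∈ f i, ∃ y ∈ f j, (k2veeM n).Adj x y) :
    Touch (idx '' f i) (idx '' f j) := by
  obtain ⟨x, hx, y, hy, hadj⟩ := h
  exact ⟨idx x, ⟨x, hx, rfl⟩, idx y, ⟨y, hy, rfl⟩, adj_idx (hgi _ hx) (hgj _ hy) hadj⟩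

end minors

lemma fin5_pick : ∀ i0 i1 : Fin 5, ∃ a b c : Fin 5, a ≠ b ∧ a ≠ c ∧ b ≠ c ∧
    a ≠ i0 ∧ a ≠ i1 ∧ b ≠ i0 ∧ b ≠ i1 ∧ c ≠ i0 ∧ c ≠ i1 := by decide

theorem noK5 : ¬ HasMinor (k2veeM n) (SimpleGraph.completeGraph (Fin 5)) := by
  rintro ⟨f, hne, hconn, hdisj, hedge⟩
  obtain ⟨i0, i1, hcov⟩ := bad_cover f hdisj
  obtain ⟨a, b, c, hab, hac, hbc, ha0, ha1, hb0, hb1, hc0, hc1⟩ := fin5_pick i0 i1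
  have hg : ∀ i : Fin 5, i ≠ i0 → i ≠ i1 → ∀ v ∈ f i, Good v := by
    intro i h0 h1
    by_contra h
    rcases hcov i h with rfl | rfl <;> simp_all
  have hga := hg a ha0 ha1; have hgb := hg b hb0 hb1; have hgc := hg c hc0 hc1
  have adj : ∀ i j : Fin 5, i ≠ j → (SimpleGraph.completeGraph (Fin 5)).Adj i j := fun i j h => h
  exact no_k3 (oc_image hga (hconn a)) (oc_image hgb (hconn b)) (oc_image hgc (hconn c))
    ((hne a).image idx) ((hne b).image idx) ((hne c).image idx)
    (img_disjoint hdisj hga hgb hab) (img_disjoint hdisj hga hgc hac)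
    (img_disjoint hdisj hgb hgc hbc)
    (img_touch hga hgb (hedge a b (adj a b hab)))
    (img_touch hga hgc (hedge a c (adj a c hac)))
    (img_touch hgb hgc (hedge b c (adj b c hbc)))

set_option synthInstance.maxSize 2000 in
set_option maxHeartbeats 1000000 in
lemma fin33_pick : ∀ i0 i1 : Fin 3 ⊕ Fin 3,
    ((∃ a1 a2 : Fin 3, a1 ≠ a2 ∧
      (Sum.inl a1 ≠ i0 ∧ Sum.inl a1 ≠ i1) ∧ (Sum.inl a2 ≠ i0 ∧ Sum.inl a2 ≠ i1)) ∧
     (∃ b1 b2 : Fin 3, b1 ≠ b2 ∧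
      (Sum.inr b1 ≠ i0 ∧ Sum.inr b1 ≠ i1) ∧ (Sum.inr b2 ≠ i0 ∧ Sum.inr b2 ≠ i1))) ∨
    (∃ a : Fin 3, (Sum.inl a ≠ i0 ∧ Sum.inl a ≠ i1) ∧
      ∀ b : Fin 3, (Sum.inr b : Fin 3 ⊕ Fin 3) ≠ i0 ∧ (Sum.inr b : Fin 3 ⊕ Fin 3) ≠ i1) ∨
    (∃ b : Fin 3, (Sum.inr b ≠ i0 ∧ Sum.inr b ≠ i1) ∧
      ∀ a : Fin 3, (Sum.inl a : Fin 3 ⊕ Fin 3) ≠ i0 ∧ (Sum.inl a : Fin 3 ⊕ Fin 3) ≠ i1) := by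
  decide

theorem noK33 : ¬ HasMinor (k2veeM n) (completeBipartiteGraph (Fin 3) (Fin 3)) := by
  rintro ⟨f, hne, hconn, hdisj, hedge⟩
  obtain ⟨i0, i1, hcov⟩ := bad_cover f hdisj
  have hg : ∀ i, i ≠ i0 → i ≠ i1 → ∀ v ∈ f i, Good v := by
    intro i h0 h1
    by_contra h
    rcases hcov i h with rfl | rfl <;> simp_all
  have adj : ∀ (a b : Fin 3), (completeBipartiteGraph (Fin 3) (Fin 3)).Adj (Sum.inl a) (Sum.inr b) := by
    intro a b; simp [completeBipartiteGraph]
  rcases fin33_pick i0 i1 with ⟨⟨a1, a2, ha, ⟨g1, g2⟩, ⟨g3, g4⟩⟩, ⟨b1, b2, hb, ⟨g5, g6⟩, ⟨g7, g8⟩⟩⟩ |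
    ⟨a, ⟨g1, g2⟩, hall⟩ | ⟨b, ⟨g1, g2⟩, hall⟩
  · have hA1 := hg _ g1 g2; have hA2 := hg _ g3 g4
    have hB1 := hg _ g5 g6; have hB2 := hg _ g7 g8
    exact no_c4 (oc_image hA1 (hconn _)) (oc_image hA2 (hconn _))
      (oc_image hB1 (hconn _)) (oc_image hB2 (hconn _))
      ((hne _).image idx) ((hne _).image idx) ((hne _).image idx) ((hne _).image idx)
      (img_disjoint hdisj hA1 hA2 (by simp [ha])) (img_disjoint hdisj hB1 hB2 (by simp [hb]))
      (img_disjoint hdisj hA1 hB1 (by simp)) (img_disjoint hdisj hA1 hB2 (by simp))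
      (img_disjoint hdisj hA2 hB1 (by simp)) (img_disjoint hdisj hA2 hB2 (by simp))
      (img_touch hA1 hB1 (hedge _ _ (adj a1 b1))) (img_touch hA1 hB2 (hedge _ _ (adj a1 b2)))
      (img_touch hA2 hB1 (hedge _ _ (adj a2 b1))) (img_touch hA2 hB2 (hedge _ _ (adj a2 b2)))
  · have hI := hg _ g1 g2
    have h0 := hg _ (hall 0).1 (hall 0).2
    have h1 := hg _ (hall 1).1 (hall 1).2
    have h2 := hg _ (hall 2).1 (hall 2).2
    exact no_k13 (oc_image hI (hconn _)) (oc_image h0 (hconn _)) (oc_image h1 (hconn _))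
      (oc_image h2 (hconn _))
      ((hne _).image idx) ((hne _).image idx) ((hne _).image idx) ((hne _).image idx)
      (img_disjoint hdisj h0 h1 (by simp)) (img_disjoint hdisj h0 h2 (by simp))
      (img_disjoint hdisj h1 h2 (by simp)) (img_disjoint hdisj hI h0 (by simp))
      (img_disjoint hdisj hI h1 (by simp)) (img_disjoint hdisj hI h2 (by simp))
      (img_touch hI h0 (hedge _ _ (adj a 0))) (img_touch hI h1 (hedge _ _ (adj a 1)))
      (img_touch hI h2 (hedge _ _ (adj a 2)))
  · have hI := hg _ g1 g2
    have h0 := hg _ (hall 0).1 (hall 0).2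
    have h1 := hg _ (hall 1).1 (hall 1).2
    have h2 := hg _ (hall 2).1 (hall 2).2
    have adj' : ∀ (a' : Fin 3), (completeBipartiteGraph (Fin 3) (Fin 3)).Adj (Sum.inr b) (Sum.inl a') := by
      intro a'; simp [completeBipartiteGraph]
    exact no_k13 (oc_image hI (hconn _)) (oc_image h0 (hconn _)) (oc_image h1 (hconn _))
      (oc_image h2 (hconn _))
      ((hne _).image idx) ((hne _).image idx) ((hne _).image idx) ((hne _).image idx)
      (img_disjoint hdisj h0 h1 (by simp)) (img_disjoint hdisj h0 h2 (by simp))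
      (img_disjoint hdisj h1 h2 (by simp)) (img_disjoint hdisj hI h0 (by simp))
      (img_disjoint hdisj hI h1 (by simp)) (img_disjoint hdisj hI h2 (by simp))
      (img_touch hI h0 (hedge _ _ (adj' 0))) (img_touch hI h1 (hedge _ _ (adj' 1)))
      (img_touch hI h2 (hedge _ _ (adj' 2)))



/-- a vertex adjacent to x or y cannot be u -/
lemma ne_u_of_adj_xy {v : VV n} {i : Fin 2}
    (h : (k2veeM n).Adj v (Sum.inl (Sum.inl i))) : v ≠ Sum.inr () := by
  rintro rfl
  rw [k2veeM, SimpleGraph.fromRel_adj] at h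
  simp at h

/-- adjacency between two good non-u vertices is a matching edge -/
lemma adj_matching {a b : VV n} (ha : Good a) (hb : Good b)
    (hau : a ≠ Sum.inr ()) (hbu : b ≠ Sum.inr ())
    (h : (k2veeM n).Adj a b) :
    ∃ p q : Fin (n-3), a = Sum.inl (Sum.inr p) ∧ b = Sum.inl (Sum.inr q) ∧
      p ≠ q ∧ (p : ℕ) / 2 = (q : ℕ) / 2 := by
  rcases good_cases ha with ⟨p, rfl⟩ | rfl
  · rcases good_cases hb with ⟨q, rfl⟩ | rfl
    · rw [k2veeM, SimpleGraph.fromRel_adj] at h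
      simp only [ne_eq, Sum.inl.injEq, Sum.inr.injEq] at h
      obtain ⟨hne, hr⟩ := h
      exact ⟨p, q, rfl, rfl, hne, by tauto⟩
    · exact absurd rfl hbu
  · exact absurd rfl hau

/-- the two-forest-neighbors contradiction -/
lemma pair_lemma {w a b : VV n}
    (hw : Good w) (ha : Good a) (hb : Good b)
    (hwu : w ≠ Sum.inr ()) (hau : a ≠ Sum.inr ()) (hbu : b ≠ Sum.inr ())
    (hwa : (k2veeM n).Adj w a) (hwb : (k2veeM n).Adj w b) (hab : a ≠ b) : False := by
  obtain ⟨p, q, hp, hq, hpq, hdiv⟩ := adj_matching hw ha hwu hau hwa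
  obtain ⟨p', r, hp', hr, hpr, hdiv'⟩ := adj_matching hw hb hwu hbu hwb
  rw [hp] at hp'
  have hP : p' = p := by injection (hp'.symm) with h; injection h
  rw [hP] at hpr hdiv' 
  have hqr : q ≠ r := fun e => hab (by rw [hq, hr, e])
  have h1 : (p:ℕ) ≠ (q:ℕ) := fun e => hpq (Fin.ext e)
  have h2 : (p:ℕ) ≠ (r:ℕ) := fun e => hpr (Fin.ext e)
  have h3 : (q:ℕ) ≠ (r:ℕ) := fun e => hqr (Fin.ext e)
  omega

/-- every triangle meets {x, y} -/
lemma triangle_meets {a b c : VV n}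
    (hab : (k2veeM n).Adj a b) (hbc : (k2veeM n).Adj b c) (hac : (k2veeM n).Adj a c)
    (ha : Good a) (hb : Good b) (hc : Good c) : False := by
  by_cases hau : a = Sum.inr ()
  · subst hau
    have hbu : b ≠ Sum.inr () := hab.ne'
    have hcu : c ≠ Sum.inr () := hac.ne'
    obtain ⟨p, q, hp, hq, hpq, hdiv⟩ := adj_matching hb hc hbu hcu hbc
    rw [k2veeM, SimpleGraph.fromRel_adj] at hab hac
    rw [hp] at hab; rw [hq] at hac
    simp only [ne_eq, Sum.inl.injEq, Sum.inr.injEq] at hab hac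
    have h1 : (p:ℕ) = 0 ∨ (p:ℕ) = 2 := by tauto
    have h2 : (q:ℕ) = 0 ∨ (q:ℕ) = 2 := by tauto
    have h3 : (p:ℕ) ≠ (q:ℕ) := fun e => hpq (Fin.ext e)
    omega
  · by_cases hbu : b = Sum.inr ()
    · subst hbu
      have hau' : a ≠ Sum.inr () := hab.ne
      have hcu : c ≠ Sum.inr () := hbc.ne'
      obtain ⟨p, q, hp, hq, hpq, hdiv⟩ := adj_matching ha hc hau' hcu hac
      rw [k2veeM, SimpleGraph.fromRel_adj] at hab hbc
      rw [hp] at hab; rw [hq] at hbc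
      simp only [ne_eq, Sum.inl.injEq, Sum.inr.injEq] at hab hbc
      have h1 : (p:ℕ) = 0 ∨ (p:ℕ) = 2 := by tauto
      have h2 : (q:ℕ) = 0 ∨ (q:ℕ) = 2 := by tauto
      have h3 : (p:ℕ) ≠ (q:ℕ) := fun e => hpq (Fin.ext e)
      omega
    · by_cases hcu : c = Sum.inr ()
      · subst hcu
        have hau' : a ≠ Sum.inr () := hac.ne
        have hbu' : b ≠ Sum.inr () := hbc.ne
        obtain ⟨p, q, hp, hq, hpq, hdiv⟩ := adj_matching ha hb hau' hbu' hab
        rw [k2veeM, SimpleGraph.fromRel_adj] at hac hbc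
        rw [hp] at hac; rw [hq] at hbc
        simp only [ne_eq, Sum.inl.injEq, Sum.inr.injEq] at hac hbc
        have h1 : (p:ℕ) = 0 ∨ (p:ℕ) = 2 := by tauto
        have h2 : (q:ℕ) = 0 ∨ (q:ℕ) = 2 := by tauto
        have h3 : (p:ℕ) ≠ (q:ℕ) := fun e => hpq (Fin.ext e)
        omega
      · exact pair_lemma ha hb hc hau hbu hcu hab hac hbc.ne

lemma bad3 {v1 v2 v3 : VV n} (h1 : ¬ Good v1) (h2 : ¬ Good v2) (h3 : ¬ Good v3)
    (d12 : v1 ≠ v2) (d13 : v1 ≠ v3) (d23 : v2 ≠ v3) : False := by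
  simp only [Good, not_and, not_not, ne_eq] at h1 h2 h3
  by_cases e1 : v1 = Sum.inl (Sum.inl 0) <;> by_cases e2 : v2 = Sum.inl (Sum.inl 0) <;>
    by_cases e3 : v3 = Sum.inl (Sum.inl 0) <;> simp_all



lemma cadj1 : c3Theta4.Adj (Sum.inl 0) (Sum.inl 1) := by
  simp [c3Theta4, SimpleGraph.fromRel_adj]
lemma cadj2 : c3Theta4.Adj (Sum.inl 0) (Sum.inl 2) := by
  simp [c3Theta4, SimpleGraph.fromRel_adj]
lemma cadj3 : c3Theta4.Adj (Sum.inl 1) (Sum.inl 2) := by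
  simp [c3Theta4, SimpleGraph.fromRel_adj]
lemma tadj01 : c3Theta4.Adj (Sum.inr 0) (Sum.inr 1) := by
  simp [c3Theta4, SimpleGraph.fromRel_adj, theta4, SimpleGraph.deleteEdges_adj]
lemma tadj02 : c3Theta4.Adj (Sum.inr 0) (Sum.inr 2) := by
  simp [c3Theta4, SimpleGraph.fromRel_adj, theta4, SimpleGraph.deleteEdges_adj]
lemma tadj03 : c3Theta4.Adj (Sum.inr 0) (Sum.inr 3) := by
  simp [c3Theta4, SimpleGraph.fromRel_adj, theta4, SimpleGraph.deleteEdges_adj]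
lemma tadj12 : c3Theta4.Adj (Sum.inr 1) (Sum.inr 2) := by
  simp [c3Theta4, SimpleGraph.fromRel_adj, theta4, SimpleGraph.deleteEdges_adj]
lemma tadj23 : c3Theta4.Adj (Sum.inr 2) (Sum.inr 3) := by
  simp [c3Theta4, SimpleGraph.fromRel_adj, theta4, SimpleGraph.deleteEdges_adj]

lemma not_good_cases {v : VV n} (h : ¬ Good v) :
    v = Sum.inl (Sum.inl 0) ∨ v = Sum.inl (Sum.inl 1) := by
  simp only [Good, not_and, not_not, ne_eq] at h
  by_cases e : v = Sum.inl (Sum.inl 0)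
  · exact Or.inl e
  · exact Or.inr (h e)

theorem noContain : ¬ Contains (k2veeM n) c3Theta4 := by
  rintro ⟨φ, hinj⟩
  have hne : ∀ {i j : Fin 3 ⊕ Fin 4}, i ≠ j → φ i ≠ φ j := fun h e => h (hinj e)
  have hA : ∀ {i j : Fin 3 ⊕ Fin 4}, c3Theta4.Adj i j → (k2veeM n).Adj (φ i) (φ j) :=
    fun h => φ.map_adj h
  -- a bad vertex in the C3-triangle
  obtain ⟨i3, hi3⟩ : ∃ i : Fin 3, ¬ Good (φ (Sum.inl i)) := by
    by_contra h; push_neg at h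
    exact triangle_meets (hA cadj1) (hA cadj3) (hA cadj2) (h 0) (h 1) (h 2)
  -- a bad vertex in each Θ4-triangle
  obtain ⟨jA, hjA3, hjA⟩ : ∃ j : Fin 4, j ≠ 3 ∧ ¬ Good (φ (Sum.inr j)) := by
    by_contra h; push_neg at h
    exact triangle_meets (hA tadj01) (hA tadj12) (hA tadj02)
      (h 0 (by decide)) (h 1 (by decide)) (h 2 (by decide))
  obtain ⟨jB, hjB1, hjB⟩ : ∃ j : Fin 4, j ≠ 1 ∧ ¬ Good (φ (Sum.inr j)) := by
    by_contra h; push_neg at h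
    exact triangle_meets (hA tadj02) (hA tadj23) (hA tadj03)
      (h 0 (by decide)) (h 2 (by decide)) (h 3 (by decide))
  have hAB : jA = jB := by
    by_contra h
    exact bad3 hjA hjB hi3 (hne (by simp [h])) (hne (by simp)) (hne (by simp))
  subst hAB
  have hgood : ∀ j : Fin 4, j ≠ jA → Good (φ (Sum.inr j)) := by
    intro j hj
    by_contra h
    exact bad3 hjA h hi3 (hne (by simp [Ne.symm hj])) (hne (by simp)) (hne (by simp))
  -- jA = 0 or jA = 2
  have : jA = 0 ∨ jA = 2 := by omega
  obtain ⟨i2, hbad⟩ : ∃ i : Fin 2, φ (Sum.inr jA) = Sum.inl (Sum.inl i) := by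
    rcases not_good_cases hjA with h | h
    · exact ⟨0, h⟩
    · exact ⟨1, h⟩
  rcases this with rfl | rfl
  · -- t0 is bad; t1, t2, t3 good and ≠ u
    have g1 := hgood 1 (by decide); have g2 := hgood 2 (by decide)
    have g3 := hgood 3 (by decide)
    have u1 : φ (Sum.inr 1) ≠ Sum.inr () := ne_u_of_adj_xy (hbad ▸ (hA tadj01).symm)
    have u2 : φ (Sum.inr 2) ≠ Sum.inr () := ne_u_of_adj_xy (hbad ▸ (hA tadj02).symm)
    have u3 : φ (Sum.inr 3) ≠ Sum.inr () := ne_u_of_adj_xy (hbad ▸ (hA tadj03).symm)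
    exact pair_lemma g2 g1 g3 u2 u1 u3 (hA tadj12).symm (hA tadj23) (hne (by decide))
  · -- t2 is bad; t0, t1, t3 good and ≠ u
    have g0 := hgood 0 (by decide); have g1 := hgood 1 (by decide)
    have g3 := hgood 3 (by decide)
    have u0 : φ (Sum.inr 0) ≠ Sum.inr () := ne_u_of_adj_xy (hbad ▸ (hA tadj02))
    have u1 : φ (Sum.inr 1) ≠ Sum.inr () := ne_u_of_adj_xy (hbad ▸ (hA tadj12))
    have u3 : φ (Sum.inr 3) ≠ Sum.inr () := ne_u_of_adj_xy (hbad ▸ (hA tadj23).symm)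
    exact pair_lemma g0 g1 g3 u0 u1 u3 (hA tadj01) (hA tadj03) (hne (by decide))



lemma edge_ncard (hodd : Odd n) (hn : 7 ≤ n) :
    (k2veeM n).edgeSet.ncard = 5 * n / 2 - 4 := by
  have hm : (n - 3) % 2 = 0 := by obtain ⟨k, rfl⟩ := hodd; omega
  have h2 := SimpleGraph.sum_degrees_eq_twice_card_edges (k2veeM n)
  rw [sum_deg hn hm] at h2
  have h3 : (k2veeM n).edgeSet.ncard = (k2veeM n).edgeFinset.card := by
    rw [Set.ncard_eq_toFinset_card']
    rfl
  obtain ⟨k, rfl⟩ := hodd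
  omega

end Stmt15

/-- For odd n (≥ 7, so that the matching has two distinct edges),
the graph K₂ ∨ M_{n−2} is planar, has n vertices and ⌊5n/2⌋ − 4 edges, and
contains no vertex-disjoint union of C₃ and Θ₄. -/
theorem stmt15 (n : ℕ) (hodd : Odd n) (hn : 7 ≤ n) :
    IsPlanar (k2veeM n) ∧
    Fintype.card ((Fin 2 ⊕ Fin (n - 3)) ⊕ Unit) = n ∧
    (k2veeM n).edgeSet.ncard = 5 * n / 2 - 4 ∧
    ¬ Contains (k2veeM n) c3Theta4 :=
  ⟨⟨Stmt15.noK5, Stmt15.noK33⟩, Stmt15.cardVV hn, Stmt15.edge_ncard hodd hn,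
    Stmt15.noContain⟩
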